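/- Being a basis is preserved by solitaire moves: let R ⊆ Σ^T be a TEP family and suppose pattern Q is obtained from pattern P ⊆ T_n by a single triangle solitaire move with Q ⊆ T_n. If P is a basis for the restriction of X_R to T_n, then so is Q; moreover there is a natural bijection Σ^P → Σ^Q such that corresponding colourings have the same unique valid completion to T_n. -/

import Mathlib

open Set Relation

/-- Points of the plane lattice. -/
abbrev Pt : Type := ℤ × ℤ

/-- The triangle shape `T = {(0,1),(1,1),(1,0)}`. -/
def Tshape : Set Pt := {(0, 1), (1, 1), (1, 0)}

/-- Translate of a set of points by a vector. -/
def transl (v : Pt) (S : Set Pt) : Set Pt := (fun p => v + p) '' S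

/-- Translate of a finite set of points by a vector. -/
def transF (v : Pt) (S : Finset Pt) : Finset Pt := S.image (fun p => v + p)

/-- A set is filled if every translate of `T` containing at least two of its
points is contained in it. -/
def Filled (F : Set Pt) : Prop :=
  ∀ v : Pt, 2 ≤ (F ∩ transl v Tshape).ncard → transl v Tshape ⊆ F

/-- The fill closure `φ(P)`: smallest filled superset of `P`. -/
def fill (P : Set Pt) : Set Pt := ⋂₀ {F | P ⊆ F ∧ Filled F}

/-- A single triangle solitaire move: if a translate `v + T` contains exactly two
points of `P`, replace one of them by the third point of `v + T`. -/
def Move (P Q : Finset Pt) : Prop :=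
  ∃ v x y : Pt, x ∈ Tshape ∧ y ∈ Tshape ∧ x ≠ y ∧
    v + x ∈ P ∧ v + y ∉ P ∧
    ((P : Set Pt) ∩ transl v Tshape).ncard = 2 ∧
    (Q : Set Pt) = insert (v + y) ((P : Set Pt) \ {v + x})

/-- `Q` is in the solitaire orbit of `P`. -/
def InOrbit (P Q : Finset Pt) : Prop := Relation.ReflTransGen Move P Q

/-- The discrete triangle `T_n = {(a,b) ∈ {0,…,n−1}² : a + b ≥ n − 1}`. -/
def triangle (n : ℕ) : Set Pt :=
  {p | 0 ≤ p.1 ∧ p.1 < (n : ℤ) ∧ 0 ≤ p.2 ∧ p.2 < (n : ℤ) ∧ (n : ℤ) - 1 ≤ p.1 + p.2}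

/-- Neighbourhood of a point: the other points sharing a translate of `T` with it. -/
def nbr (x : Pt) : Set Pt :=
  {y | y ≠ x ∧ ∃ v : Pt, x ∈ transl v Tshape ∧ y ∈ transl v Tshape}

/-- Neighbourhood of a set. -/
def nbrSet (A : Set Pt) : Set Pt := ⋃ a ∈ A, nbr a

/-- Two sets touch if one meets the neighbourhood of the other. -/
def Touch (A B : Set Pt) : Prop := (A ∩ nbrSet B).Nonempty ∨ (B ∩ nbrSet A).Nonempty

/-- `(r, k, v)` is a decomposition of `φ(P)` into pairwise non-touching
translated triangles `vᵢ + T_{kᵢ}`. -/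
def IsDecomp (P : Finset Pt) (r : ℕ) (k : Fin r → ℕ) (v : Fin r → Pt) : Prop :=
  (fill (P : Set Pt) = ⋃ i, transl (v i) (triangle (k i))) ∧
  (∀ i, 1 ≤ k i) ∧
  (∀ i j, i ≠ j → ¬ Touch (transl (v i) (triangle (k i))) (transl (v j) (triangle (k j))))

/-- The horizontal line `L_n = {(a, n−1) : 0 ≤ a ≤ n−1}` (top edge of `T_n`). -/
def lineF (n : ℕ) : Finset Pt :=
  (Finset.range n).image (fun a : ℕ => (((a : ℤ), (n : ℤ) - 1) : Pt))

/-- The vertical edge `{(n−1, b) : 0 ≤ b ≤ n−1}` of `T_n`. -/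
def vlineF (n : ℕ) : Finset Pt :=
  (Finset.range n).image (fun b : ℕ => ((((n : ℤ) - 1), (b : ℤ)) : Pt))

/-- The diagonal edge `{(a, n−1−a) : 0 ≤ a ≤ n−1}` of `T_n`. -/
def dlineF (n : ℕ) : Finset Pt :=
  (Finset.range n).image (fun a : ℕ => (((a : ℤ), (n : ℤ) - 1 - (a : ℤ)) : Pt))

/-- The points of `T_n` below the top line, listed row `n−2` down to row `0`,
each row from right to left. -/
def belowPts (n : ℕ) : List Pt :=
  (List.range (n - 1)).flatMap (fun i =>
    (List.range (n - 1 - i)).map (fun t =>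
      (((n : ℤ) - 1 - (t : ℤ), (n : ℤ) - 2 - (i : ℤ)) : Pt)))

/-- The canonical pattern `P_{n,k}`: the line `L_n` together with the first `k`
points of `T_n \ L_n` in the order: row `n−2` right to left, then row `n−3`, etc. -/
def PnkF (n k : ℕ) : Finset Pt := lineF n ∪ ((belowPts n).take k).toFinset

/-- A TEP family on the triangle shape, with cells ordered `(0,1), (1,1), (1,0)`:
any two of the three symbols determine the third uniquely. -/
def IsTEP {A : Type} (R : Set (A × A × A)) : Prop :=
  (∀ a b : A, ∃! c : A, (a, b, c) ∈ R) ∧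
  (∀ a c : A, ∃! b : A, (a, b, c) ∈ R) ∧
  (∀ b c : A, ∃! a : A, (a, b, c) ∈ R)

/-- A colouring is valid on `T_n` if every translate of `T` inside `T_n`
carries a pattern of `R`. -/
def ValidOn {A : Type} (R : Set (A × A × A)) (n : ℕ) (x : Pt → A) : Prop :=
  ∀ v : Pt, transl v Tshape ⊆ triangle n →
    (x (v + (0, 1)), x (v + (1, 1)), x (v + (1, 0))) ∈ R

/-- One completion step: a translate of `T` inside `T_n` has exactly two
coloured cells; colour the third using the TEP rule `R`. States are pairs
(set of coloured cells, colouring). -/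
def TStep {A : Type} (R : Set (A × A × A)) (n : ℕ)
    (s t : Set Pt × (Pt → A)) : Prop :=
  ∃ v : Pt, transl v Tshape ⊆ triangle n ∧
    ∃ c ∈ transl v Tshape, c ∉ s.1 ∧ transl v Tshape \ {c} ⊆ s.1 ∧
      t.1 = insert c s.1 ∧ (∀ p : Pt, p ≠ c → t.2 p = s.2 p) ∧
      (t.2 (v + (0, 1)), t.2 (v + (1, 1)), t.2 (v + (1, 0))) ∈ R

/-- `P ⊆ T_n` is a basis: for every colouring of `P`, every maximal run of the
iterative completion process covers `T_n` and produces a valid pattern. -/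
def IsBasis {A : Type} (R : Set (A × A × A)) (n : ℕ) (P : Finset Pt) : Prop :=
  (P : Set Pt) ⊆ triangle n ∧
  ∀ q : Pt → A, ∀ s : Set Pt × (Pt → A),
    Relation.ReflTransGen (TStep R n) ((P : Set Pt), q) s →
    (∀ t, ¬ TStep R n s t) →
    triangle n ⊆ s.1 ∧ ValidOn R n s.2

/-- Local validity of a colouring on the translate `v + T`. -/
def LV {A : Type} (R : Set (A × A × A)) (v : Pt) (x : Pt → A) : Prop :=
  (x (v + (0, 1)), x (v + (1, 1)), x (v + (1, 0))) ∈ R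

lemma transl_tri (v : Pt) :
    transl v Tshape = {v + (0, 1), v + (1, 1), v + (1, 0)} := by
  simp [transl, Tshape, Set.image_insert_eq]

lemma vadd_ne {p q : Pt} (h : p ≠ q) (v : Pt) : v + p ≠ v + q :=
  fun hh => h (add_right_injective v hh)

lemma vadd_inj {p q v : Pt} (h : v + p = v + q) : p = q := add_right_injective v h

lemma third_unique {A : Type} {R : Set (A × A × A)} (hR : IsTEP R) (v : Pt)
    {x y : Pt → A} (hx : LV R v x) (hy : LV R v y) {c : Pt}
    (hc : c ∈ transl v Tshape)
    (hagree : ∀ p ∈ transl v Tshape, p ≠ c → x p = y p) : x c = y c := by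
  rw [transl_tri] at hc hagree
  unfold LV at hx hy
  have m1 : (v + ((0:ℤ),(1:ℤ))) ∈ ({v + (0, 1), v + (1, 1), v + (1, 0)} : Set Pt) := by simp
  have m2 : (v + ((1:ℤ),(1:ℤ))) ∈ ({v + (0, 1), v + (1, 1), v + (1, 0)} : Set Pt) := by simp
  have m3 : (v + ((1:ℤ),(1:ℤ))) ∈ ({v + (0, 1), v + (1, 1), v + (1, 0)} : Set Pt) := by simp
  rcases hc with rfl | rfl | rfl
  · have e2 : x (v + (1, 1)) = y (v + (1, 1)) := hagree _ (by simp) (vadd_ne (by decide) v)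
    have e3 : x (v + (1, 0)) = y (v + (1, 0)) := hagree _ (by simp) (vadd_ne (by decide) v)
    obtain ⟨a0, -, hu⟩ := hR.2.2 (x (v + (1, 1))) (x (v + (1, 0)))
    rw [← e2, ← e3] at hy
    exact (hu _ hx).trans (hu _ hy).symm
  · have e1 : x (v + (0, 1)) = y (v + (0, 1)) := hagree _ (by simp) (vadd_ne (by decide) v)
    have e3 : x (v + (1, 0)) = y (v + (1, 0)) := hagree _ (by simp) (vadd_ne (by decide) v)
    obtain ⟨a0, -, hu⟩ := hR.2.1 (x (v + (0, 1))) (x (v + (1, 0)))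
    rw [← e1, ← e3] at hy
    exact (hu _ hx).trans (hu _ hy).symm
  · have e1 : x (v + (0, 1)) = y (v + (0, 1)) := hagree _ (by simp) (vadd_ne (by decide) v)
    have e2 : x (v + (1, 1)) = y (v + (1, 1)) := hagree _ (by simp) (vadd_ne (by decide) v)
    obtain ⟨a0, -, hu⟩ := hR.1 (x (v + (0, 1))) (x (v + (1, 1)))
    rw [← e1, ← e2] at hy
    exact (hu _ hx).trans (hu _ hy).symm

lemma third_exists {A : Type} {R : Set (A × A × A)} (hR : IsTEP R) (v : Pt)
    (x : Pt → A) {c : Pt} (hc : c ∈ transl v Tshape) :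
    ∃ γ, LV R v (Function.update x c γ) := by
  rw [transl_tri] at hc
  rcases hc with rfl | rfl | rfl
  · obtain ⟨γ, hγ, -⟩ := hR.2.2 (x (v + (1, 1))) (x (v + (1, 0)))
    refine ⟨γ, ?_⟩
    unfold LV
    rw [Function.update_self,
      Function.update_of_ne (vadd_ne (by decide) v),
      Function.update_of_ne (vadd_ne (by decide) v)]
    exact hγ
  · obtain ⟨γ, hγ, -⟩ := hR.2.1 (x (v + (0, 1))) (x (v + (1, 0)))
    refine ⟨γ, ?_⟩
    unfold LV
    rw [Function.update_self,
      Function.update_of_ne (vadd_ne (by decide) v),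
      Function.update_of_ne (vadd_ne (by decide) v)]
    exact hγ
  · obtain ⟨γ, hγ, -⟩ := hR.1 (x (v + (0, 1))) (x (v + (1, 1)))
    refine ⟨γ, ?_⟩
    unfold LV
    rw [Function.update_self,
      Function.update_of_ne (vadd_ne (by decide) v),
      Function.update_of_ne (vadd_ne (by decide) v)]
    exact hγ

lemma run_mono {A : Type} {R : Set (A × A × A)} {n : ℕ}
    {s t : Set Pt × (Pt → A)} (h : Relation.ReflTransGen (TStep R n) s t) :
    s.1 ⊆ t.1 ∧ (∀ p ∈ s.1, t.2 p = s.2 p) ∧ (s.1 ⊆ triangle n → t.1 ⊆ triangle n) := by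
  induction h with
  | refl => exact ⟨subset_rfl, fun _ _ => rfl, fun h => h⟩
  | tail hab hbc ih =>
    obtain ⟨v, hv, c, hcT, hcnot, htwo, ht1, ht2, hmem⟩ := hbc
    refine ⟨ih.1.trans (by rw [ht1]; exact Set.subset_insert _ _), ?_, ?_⟩
    · intro p hp
      rw [ht2 p (fun he => hcnot (he ▸ ih.1 hp)), ih.2.1 p hp]
    · intro hs
      rw [ht1]
      exact Set.insert_subset (hv hcT) (ih.2.2 hs)

lemma triangle_finite (n : ℕ) : (triangle n).Finite := by
  apply Set.Finite.subset ((Set.finite_Icc (0:ℤ) n).prod (Set.finite_Icc (0:ℤ) n))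
  rintro ⟨a, b⟩ ⟨h1, h2, h3, h4, h5⟩
  exact ⟨⟨h1, h2.le⟩, ⟨h3, h4.le⟩⟩

lemma max_exists {A : Type} (R : Set (A × A × A)) (n : ℕ) :
    ∀ (m : ℕ) (s : Set Pt × (Pt → A)), s.1 ⊆ triangle n →
      (triangle n \ s.1).ncard ≤ m →
      ∃ t, Relation.ReflTransGen (TStep R n) s t ∧ ∀ u, ¬ TStep R n t u := by
  intro m
  induction m with
  | zero =>
    intro s hs h0
    refine ⟨s, .refl, fun u hu => ?_⟩
    obtain ⟨v, hv, c, hcT, hcnot, -⟩ := hu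
    have hfin : (triangle n \ s.1).Finite := (triangle_finite n).diff
    have hpos := (Set.ncard_pos hfin).mpr ⟨c, hv hcT, hcnot⟩
    omega
  | succ m ih =>
    intro s hs hle
    by_cases hmax : ∀ u, ¬ TStep R n s u
    · exact ⟨s, .refl, hmax⟩
    · push_neg at hmax
      obtain ⟨u, hu⟩ := hmax
      obtain ⟨v, hv, c, hcT, hcnot, htwo, hu1, -⟩ := id hu
      have hu_sub : u.1 ⊆ triangle n := by
        rw [hu1]; exact Set.insert_subset (hv hcT) hs
      have hdec : (triangle n \ u.1).ncard < (triangle n \ s.1).ncard := by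
        rw [hu1]
        have hfin : (triangle n \ s.1).Finite := (triangle_finite n).diff
        have h1 : triangle n \ insert c s.1 = (triangle n \ s.1) \ {c} := by
          ext p
          simp only [Set.mem_diff, Set.mem_insert_iff, Set.mem_singleton_iff]
          tauto
        rw [h1]
        exact Set.ncard_diff_singleton_lt_of_mem ⟨hv hcT, hcnot⟩ hfin
      obtain ⟨t, ht, hmax'⟩ := ih u hu_sub (by omega)
      exact ⟨t, Relation.ReflTransGen.head hu ht, hmax'⟩

lemma step_of_config {A : Type} {R : Set (A × A × A)} (hR : IsTEP R) {n : ℕ}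
    (s : Set Pt × (Pt → A)) {v c : Pt} (hv : transl v Tshape ⊆ triangle n)
    (hcT : c ∈ transl v Tshape) (hcnot : c ∉ s.1)
    (htwo : transl v Tshape \ {c} ⊆ s.1) :
    ∃ t, TStep R n s t := by
  obtain ⟨γ, hγ⟩ := third_exists hR v s.2 hcT
  exact ⟨(insert c s.1, Function.update s.2 c γ), v, hv, c, hcT, hcnot, htwo, rfl,
    fun p hp => Function.update_of_ne hp _ _, hγ⟩

lemma run_follow {A : Type} {R : Set (A × A × A)} (hR : IsTEP R) {n : ℕ}
    {x : Pt → A} (hx : ValidOn R n x)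
    {s t : Set Pt × (Pt → A)} (h : Relation.ReflTransGen (TStep R n) s t)
    (hbase : ∀ p ∈ s.1, s.2 p = x p) : ∀ p ∈ t.1, t.2 p = x p := by
  induction h with
  | refl => exact hbase
  | tail hab hbc ih =>
    obtain ⟨v, hv, c, hcT, hcnot, htwo, ht1, ht2, hmem⟩ := hbc
    intro p hp
    rw [ht1, Set.mem_insert_iff] at hp
    rcases hp with rfl | hpb
    · have hLVx : LV R v x := hx v hv
      have hLVt : LV R v _ := hmem
      refine third_unique hR v hLVt hLVx hcT ?_
      intro p' hp'T hp'ne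
      rw [ht2 p' hp'ne]
      exact ih p' (htwo ⟨hp'T, hp'ne⟩)
    · rw [ht2 p (fun he => hcnot (he ▸ hpb)), ih p hpb]

lemma validOn_of_agree {A : Type} {R : Set (A × A × A)} {n : ℕ} {x y : Pt → A}
    (hx : ValidOn R n x) (h : ∀ p ∈ triangle n, y p = x p) : ValidOn R n y := by
  intro v hv
  have h1 := h (v + (0,1)) (hv (by rw [transl_tri]; simp))
  have h2 := h (v + (1,1)) (hv (by rw [transl_tri]; simp))
  have h3 := h (v + (1,0)) (hv (by rw [transl_tri]; simp))
  rw [h1, h2, h3]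
  exact hx v hv

lemma basis_ext {A : Type} {R : Set (A × A × A)} {n : ℕ} {P : Finset Pt}
    (hB : IsBasis R n P) (q : Pt → A) :
    ∃ x : Pt → A, ValidOn R n x ∧ ∀ p ∈ (P : Set Pt), x p = q p := by
  obtain ⟨t, hrun, hmax⟩ :=
    max_exists R n ((triangle n \ (P : Set Pt)).ncard) ((P : Set Pt), q) hB.1 le_rfl
  obtain ⟨hcov, hval⟩ := hB.2 q t hrun hmax
  exact ⟨t.2, hval, fun p hp => (run_mono hrun).2.1 p hp⟩

lemma basis_unique {A : Type} {R : Set (A × A × A)} (hR : IsTEP R) {n : ℕ}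
    {P : Finset Pt} (hB : IsBasis R n P) {x y : Pt → A}
    (hx : ValidOn R n x) (hy : ValidOn R n y)
    (hagree : ∀ p ∈ (P : Set Pt), x p = y p) :
    ∀ p ∈ triangle n, x p = y p := by
  obtain ⟨t, hrun, hmax⟩ :=
    max_exists R n ((triangle n \ (P : Set Pt)).ncard) ((P : Set Pt), x) hB.1 le_rfl
  obtain ⟨hcov, -⟩ := hB.2 x t hrun hmax
  have h1 := run_follow hR hx hrun (fun p _ => rfl)
  have h2 := run_follow hR hy hrun (fun p hp => hagree p hp)
  intro p hp
  rw [← h1 p (hcov hp)]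
  exact h2 p (hcov hp)

lemma basis_cover {A : Type} [Nonempty A] {R : Set (A × A × A)} {n : ℕ}
    {P : Finset Pt} (hB : IsBasis R n P) {F : Set Pt}
    (hfill : ∀ v c, transl v Tshape ⊆ triangle n → c ∈ transl v Tshape →
      transl v Tshape \ {c} ⊆ F → c ∈ F)
    (hPF : (P : Set Pt) ⊆ F) : triangle n ⊆ F := by
  have q : Pt → A := fun _ => Classical.arbitrary A
  have key : ∀ s : Set Pt × (Pt → A),
      Relation.ReflTransGen (TStep R n) ((P : Set Pt), q) s → s.1 ⊆ F := by
    intro s hs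
    induction hs with
    | refl => exact hPF
    | tail hab hbc ih =>
      obtain ⟨v, hv, c, hcT, hcnot, htwo, ht1, -⟩ := hbc
      rw [ht1]
      exact Set.insert_subset (hfill v c hv hcT (htwo.trans ih)) ih
  obtain ⟨t, hrun, hmax⟩ :=
    max_exists R n ((triangle n \ (P : Set Pt)).ncard) ((P : Set Pt), q) hB.1 le_rfl
  obtain ⟨hcov, -⟩ := hB.2 q t hrun hmax
  exact hcov.trans (key t hrun)

lemma tshape_eq {a b c : Pt} (ha : a ∈ Tshape) (hb : b ∈ Tshape) (hc : c ∈ Tshape)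
    (hab : a ≠ b) (hac : a ≠ c) (hbc : b ≠ c) : Tshape = {a, b, c} := by
  simp only [Tshape, Set.mem_insert_iff, Set.mem_singleton_iff] at ha hb hc
  rcases ha with rfl | rfl | rfl <;> rcases hb with rfl | rfl | rfl <;>
    rcases hc with rfl | rfl | rfl <;>
      first
        | exact absurd rfl hab
        | exact absurd rfl hac
        | exact absurd rfl hbc
        | (ext p; simp only [Tshape, Set.mem_insert_iff, Set.mem_singleton_iff]; try tauto)

lemma move_data {P Q : Finset Pt} (hmv : Move P Q) :
    ∃ v a b c : Pt, a ∈ Tshape ∧ b ∈ Tshape ∧ c ∈ Tshape ∧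
      a ≠ b ∧ a ≠ c ∧ b ≠ c ∧
      v + a ∈ P ∧ v + b ∉ P ∧ v + c ∈ P ∧
      (Q : Set Pt) = insert (v + b) ((P : Set Pt) \ {v + a}) := by
  obtain ⟨v, a, b, ha, hb, hab, hvaP, hvbP, h2, hQeq⟩ := hmv
  obtain ⟨u, w, huw, hset⟩ := Set.ncard_eq_two.mp h2
  have hvaT : v + a ∈ transl v Tshape := Set.mem_image_of_mem _ ha
  have hmem : v + a ∈ ({u, w} : Set Pt) := by
    rw [← hset]; exact ⟨hvaP, hvaT⟩
  have key : ∃ z, z ≠ v + a ∧ z ∈ (P : Set Pt) ∩ transl v Tshape := by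
    rcases hmem with rfl | rfl
    · exact ⟨w, fun h => huw h.symm, by rw [hset]; exact Set.mem_insert_of_mem _ rfl⟩
    · exact ⟨u, huw, by rw [hset]; exact Set.mem_insert _ _⟩
  obtain ⟨z, hzne, hzP, hzT⟩ := key
  obtain ⟨c, hc, rfl⟩ := hzT
  refine ⟨v, a, b, c, ha, hb, hc, hab, ?_, ?_, hvaP, hvbP, hzP, hQeq⟩
  · exact fun h => hzne (by rw [h])
  · exact fun h => hvbP (h ▸ hzP)

/-- being a basis is preserved by solitaire moves, and the move
induces a bijection between colourings with the same valid completions. -/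
theorem basis_preserved_by_move {A : Type} [Fintype A]
    (R : Set (A × A × A)) (hR : IsTEP R) (n : ℕ) (P Q : Finset Pt)
    (hP : (P : Set Pt) ⊆ triangle n) (hQ : (Q : Set Pt) ⊆ triangle n)
    (hmv : Move P Q) (hB : IsBasis R n P) :
    IsBasis R n Q ∧
    ∃ e : (↥P → A) ≃ (↥Q → A),
      ∀ (f : ↥P → A) (x : Pt → A), ValidOn R n x →
        ((∀ p : ↥P, x ↑p = f p) ↔ (∀ p : ↥Q, x ↑p = e f p)) := by
  classical
  obtain ⟨v, a, b, c, haT, hbT, hcT, hab, hac, hbc, hvaP, hvbP, hvcP, hQeq⟩ := move_data hmv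
  have htr : transl v Tshape = {v + a, v + b, v + c} := by
    rw [tshape_eq haT hbT hcT hab hac hbc]
    simp [transl, Set.image_insert_eq]
  have hvaT : v + a ∈ transl v Tshape := by rw [htr]; exact Set.mem_insert _ _
  have hvbQ : v + b ∈ (Q : Set Pt) := by rw [hQeq]; exact Set.mem_insert _ _
  have hvcQ : v + c ∈ (Q : Set Pt) := by
    rw [hQeq]
    exact Set.mem_insert_of_mem _ ⟨hvcP, fun h => hac (vadd_inj h).symm⟩
  have hvaQ : v + a ∉ (Q : Set Pt) := by
    rw [hQeq]
    rintro (h | h)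
    · exact hab (vadd_inj h)
    · exact h.2 rfl
  have hvT_tri : transl v Tshape ⊆ triangle n := by
    rw [htr]
    rintro p hp
    simp only [Set.mem_insert_iff, Set.mem_singleton_iff] at hp
    rcases hp with rfl | rfl | rfl
    · exact hP hvaP
    · exact hQ hvbQ
    · exact hP hvcP
  have hPsub : ∀ {F : Set Pt}, (Q : Set Pt) ⊆ F → v + a ∈ F → (P : Set Pt) ⊆ F := by
    intro F hQF haF p hp
    rcases eq_or_ne p (v + a) with rfl | hne
    · exact haF
    · exact hQF (by rw [hQeq]; exact Set.mem_insert_of_mem _ ⟨hp, hne⟩)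
  rcases isEmpty_or_nonempty A with hA | hA
  · refine ⟨⟨hQ, fun q => (hA.false (q (0, 0))).elim⟩, ?_⟩
    haveI h1 : IsEmpty (↥P → A) := ⟨fun f => hA.false (f ⟨v + a, hvaP⟩)⟩
    haveI h2 : IsEmpty (↥Q → A) := ⟨fun g => hA.false (g ⟨v + b, hvbQ⟩)⟩
    exact ⟨Equiv.equivOfIsEmpty _ _, fun f => (h1.false f).elim⟩
  -- Q is a basis
  have hBQ : IsBasis R n Q := by
    refine ⟨hQ, ?_⟩
    intro g s hrun hmax
    have hQsub : (Q : Set Pt) ⊆ s.1 := (run_mono hrun).1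
    have hfill : ∀ v' c', transl v' Tshape ⊆ triangle n → c' ∈ transl v' Tshape →
        transl v' Tshape \ {c'} ⊆ s.1 → c' ∈ s.1 := by
      intro v' c' hv' hc'T htwo
      by_contra hc'
      obtain ⟨t, ht⟩ := step_of_config hR s hv' hc'T hc' htwo
      exact hmax t ht
    have hvaS : v + a ∈ s.1 := by
      refine hfill v (v + a) hvT_tri hvaT ?_
      rw [htr]
      rintro p ⟨hp, hpa⟩
      simp only [Set.mem_insert_iff, Set.mem_singleton_iff] at hp
      simp only [Set.mem_singleton_iff] at hpa
      rcases hp with rfl | rfl | rfl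
      · exact absurd rfl hpa
      · exact hQsub hvbQ
      · exact hQsub hvcQ
    have hPs : (P : Set Pt) ⊆ s.1 := hPsub hQsub hvaS
    have hcov : triangle n ⊆ s.1 := basis_cover hB hfill hPs
    -- build a valid colouring agreeing with g on Q
    obtain ⟨γ, hγ⟩ := third_exists hR v g hvaT
    obtain ⟨x, hxval, hxP⟩ := basis_ext hB (Function.update g (v + a) γ)
    have hba : (v : Pt) + b ≠ v + a := vadd_ne (fun h => hab h.symm) v
    have hca : (v : Pt) + c ≠ v + a := vadd_ne (fun h => hac h.symm) v
    have hxQ : ∀ p ∈ (Q : Set Pt), x p = g p := by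
      intro p hp
      rw [hQeq] at hp
      rcases hp with rfl | ⟨hpP, hpa⟩
      · have h1 : LV R v x := hxval v hvT_tri
        have h3 : x (v + b) = Function.update g (v + a) γ (v + b) := by
          refine third_unique hR v h1 hγ (by rw [htr]; simp) ?_
          intro p' hp'T hp'ne
          rw [htr] at hp'T
          simp only [Set.mem_insert_iff, Set.mem_singleton_iff] at hp'T
          rcases hp'T with rfl | rfl | rfl
          · exact hxP _ hvaP
          · exact absurd rfl hp'ne
          · exact hxP _ hvcP
        rw [h3, Function.update_of_ne hba]
      · simp only [Set.mem_singleton_iff] at hpa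
        rw [hxP p hpP, Function.update_of_ne hpa]
    have hfollow := run_follow hR hxval hrun (fun p hp => (hxQ p hp).symm)
    exact ⟨hcov, validOn_of_agree hxval (fun p hp => hfollow p (hcov hp))⟩
  -- the bijection
  have hexP : ∀ f : ↥P → A, ∃ x, ValidOn R n x ∧ ∀ p : ↥P, x ↑p = f p := by
    intro f
    obtain ⟨x, hv', hagr⟩ := basis_ext hB
      (fun p => if h : p ∈ P then f ⟨p, h⟩ else Classical.arbitrary A)
    exact ⟨x, hv', fun p => by rw [hagr ↑p p.2]; exact dif_pos p.2⟩
  have hexQ : ∀ g : ↥Q → A, ∃ x, ValidOn R n x ∧ ∀ p : ↥Q, x ↑p = g p := by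
    intro g
    obtain ⟨x, hv', hagr⟩ := basis_ext hBQ
      (fun p => if h : p ∈ Q then g ⟨p, h⟩ else Classical.arbitrary A)
    exact ⟨x, hv', fun p => by rw [hagr ↑p p.2]; exact dif_pos p.2⟩
  choose cP cPval cPagr using hexP
  choose cQ cQval cQagr using hexQ
  set Fm : (↥P → A) → (↥Q → A) := fun f q => cP f ↑q with hFm
  set Gm : (↥Q → A) → (↥P → A) := fun g p => cQ g ↑p with hGm
  have keyP : ∀ (f : ↥P → A) (x : Pt → A), ValidOn R n x →
      ((∀ p : ↥P, x ↑p = f p) ↔ (∀ p : ↥Q, x ↑p = Fm f p)) := by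
    intro f x hx
    constructor
    · intro hxf q
      have hagree : ∀ p ∈ (P : Set Pt), x p = cP f p := by
        intro p hp
        rw [hxf ⟨p, hp⟩, cPagr f ⟨p, hp⟩]
      exact basis_unique hR hB hx (cPval f) hagree ↑q (hQ q.2)
    · intro hxq p
      have hagree : ∀ p' ∈ (Q : Set Pt), x p' = cP f p' := fun p' hp' => hxq ⟨p', hp'⟩
      rw [basis_unique hR hBQ hx (cPval f) hagree ↑p (hP p.2), cPagr f p]
  have keyQ : ∀ (g : ↥Q → A) (x : Pt → A), ValidOn R n x →
      ((∀ q : ↥Q, x ↑q = g q) ↔ (∀ p : ↥P, x ↑p = Gm g p)) := by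
    intro g x hx
    constructor
    · intro hxg p
      have hagree : ∀ p' ∈ (Q : Set Pt), x p' = cQ g p' := by
        intro p' hp'
        rw [hxg ⟨p', hp'⟩, cQagr g ⟨p', hp'⟩]
      exact basis_unique hR hBQ hx (cQval g) hagree ↑p (hP p.2)
    · intro hxp q
      have hagree : ∀ p' ∈ (P : Set Pt), x p' = cQ g p' := fun p' hp' => hxp ⟨p', hp'⟩
      rw [basis_unique hR hB hx (cQval g) hagree ↑q (hQ q.2), cQagr g q]
  have hleft : ∀ f, Gm (Fm f) = f := by
    intro f
    funext p
    have h2 := (keyQ (Fm f) (cP f) (cPval f)).mp (fun q => rfl)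
    rw [← h2 p]
    exact cPagr f p
  have hright : ∀ g, Fm (Gm g) = g := by
    intro g
    funext q
    have h2 := (keyP (Gm g) (cQ g) (cQval g)).mp (fun p => rfl)
    rw [← h2 q]
    exact cQagr g q
  exact ⟨hBQ, ⟨Fm, Gm, hleft, hright⟩, fun f x hx => keyP f x hx⟩
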